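/- Let Q > 0 and Z ∈ ℂ with |Z| ≥ 1/√Q. Then ((1 + Q)/π) ∫_{{z ∈ ℂ : |z| < 1/√Q}} log|Z − z|²/(1 + |z|²)² dA(z) = log|Z|², where dA denotes two-dimensional Lebesgue (area) measure on ℂ. -/

import Mathlib

open MeasureTheory Set Metric

lemma integrableOnLogIoc (a : ℝ) : IntegrableOn Real.log (Set.Ioc 0 a) := by
  rcases le_or_gt a 0 with h | h
  · rw [Set.Ioc_eq_empty (by simpa using h)]; exact integrableOn_empty
  · have hb : IntegrableOn (fun x : ℝ => 2 * x ^ (-(1:ℝ)/2) + x) (Set.Ioc 0 a) := by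
      have h1 : IntervalIntegrable (fun x : ℝ => x ^ (-(1:ℝ)/2)) volume 0 a :=
        intervalIntegral.intervalIntegrable_rpow' (by norm_num)
      have := ((h1.const_mul 2).add ((continuous_id.intervalIntegrable 0 a) : IntervalIntegrable (fun x : ℝ => x) volume 0 a))
      exact (intervalIntegrable_iff_integrableOn_Ioc_of_le h.le).mp this
    refine Integrable.mono' hb Real.measurable_log.aestronglyMeasurable ?_
    filter_upwards [ae_restrict_mem measurableSet_Ioc] with x hx
    obtain ⟨hx0, _⟩ := hx
    rcases le_or_gt x 1 with hx1 | hx1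
    · have hlog : Real.log x ≤ 0 := Real.log_nonpos hx0.le hx1
      have h2 : -Real.log x ≤ 2 * x ^ (-(1:ℝ)/2) := by
        have : Real.log (x ^ (-(1:ℝ)/2)) = (-(1:ℝ)/2) * Real.log x := Real.log_rpow hx0 _
        have h3 : Real.log (x ^ (-(1:ℝ)/2)) ≤ x ^ (-(1:ℝ)/2) - 1 :=
          Real.log_le_sub_one_of_pos (Real.rpow_pos_of_pos hx0 _)
        nlinarith [Real.rpow_pos_of_pos hx0 (-(1:ℝ)/2)]
      have : (0:ℝ) < x := hx0
      simp only [Real.norm_eq_abs, abs_of_nonpos hlog]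
      linarith
    · have hlog : 0 ≤ Real.log x := Real.log_nonneg hx1.le
      have h2 : Real.log x ≤ x - 1 := Real.log_le_sub_one_of_pos hx0
      simp only [Real.norm_eq_abs, abs_of_nonneg hlog]
      nlinarith [Real.rpow_pos_of_pos hx0 (-(1:ℝ)/2)]

lemma meanValueLog (Z : ℂ) (s : ℝ) (hs : 0 < s) (hsZ : s < ‖Z‖) :
    ∫ θ in (0:ℝ)..(2*Real.pi), Real.log (‖Z - circleMap 0 s θ‖) =
      2 * Real.pi * Real.log (‖Z‖) := by
  have hZ0 : Z ≠ 0 := by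
    intro h; rw [h] at hsZ; simp at hsZ; linarith
  set f : ℂ → ℂ := fun w => Complex.log (1 - w / Z) with hf
  have hslit : ∀ w ∈ closedBall (0:ℂ) s, (1 - w / Z) ∈ Complex.slitPlane := by
    intro w hw
    rw [mem_closedBall, dist_zero_right] at hw
    left
    have h1 : ‖w / Z‖ < 1 := by
      rw [norm_div]
      rw [div_lt_one (norm_pos_iff.mpr hZ0)]
      calc ‖w‖ ≤ s := hw
        _ < ‖Z‖ := hsZ
    have h2 : (w / Z).re ≤ ‖w / Z‖ := Complex.re_le_norm _
    simp only [Complex.sub_re, Complex.one_re]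
    linarith
  have hdiff : ∀ w ∈ closedBall (0:ℂ) s, DifferentiableAt ℂ f w := by
    intro w hw
    exact (Complex.differentiableAt_log (hslit w hw)).comp w
      ((differentiableAt_const _).sub (differentiableAt_id.div_const Z))
  have hd : DiffContOnCl ℂ f (ball 0 s) := by
    apply DifferentiableOn.diffContOnCl
    rw [closure_ball 0 hs.ne']
    exact fun w hw => (hdiff w hw).differentiableWithinAt
  have hcauchy := hd.circleIntegral_sub_inv_smul (w := 0) (mem_ball_self hs)
  have hf0 : f 0 = 0 := by simp [hf]
  rw [hf0, smul_zero] at hcauchy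
  -- unfold circle integral
  have hne : ∀ θ : ℝ, circleMap 0 s θ ≠ 0 := fun θ => circleMap_ne_center hs.ne'
  have h1 : (∮ z in C(0, s), (z - 0)⁻¹ • f z)
      = Complex.I * ∫ θ in (0:ℝ)..(2*Real.pi), f (circleMap 0 s θ) := by
    simp only [circleIntegral, deriv_circleMap, smul_eq_mul, sub_zero]
    rw [← intervalIntegral.integral_const_mul]
    refine intervalIntegral.integral_congr fun θ _ => ?_
    field_simp [hne θ]
  have h2 : (∫ θ in (0:ℝ)..(2*Real.pi), f (circleMap 0 s θ)) = 0 := by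
    rw [hcauchy] at h1
    rcases mul_eq_zero.mp h1.symm with h | h
    · exact absurd h Complex.I_ne_zero
    · exact h
  -- continuity
  have hcont : Continuous fun θ : ℝ => f (circleMap 0 s θ) := by
    rw [continuous_iff_continuousAt]
    intro θ
    have hmem : circleMap 0 s θ ∈ closedBall (0:ℂ) s := by
      simp [mem_closedBall, dist_zero_right, norm_circleMap_zero, abs_of_pos hs]
    exact ((hdiff _ hmem).continuousAt).comp (continuous_circleMap 0 s).continuousAt
  have h3 : (∫ θ in (0:ℝ)..(2*Real.pi), (f (circleMap 0 s θ)).re) = 0 := by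
    have := Complex.reCLM.intervalIntegral_comp_comm
      (hcont.intervalIntegrable (μ := volume) 0 (2*Real.pi))
    simpa [h2] using this
  have hZsub : ∀ θ : ℝ, Z - circleMap 0 s θ ≠ 0 := by
    intro θ h
    rw [sub_eq_zero] at h
    have : ‖circleMap 0 s θ‖ = ‖Z‖ := by rw [← h]
    rw [norm_circleMap_zero, abs_of_pos hs] at this
    linarith
  have h4 : ∀ θ : ℝ, (f (circleMap 0 s θ)).re
      = Real.log (‖Z - circleMap 0 s θ‖) - Real.log (‖Z‖) := by
    intro θ
    have he : 1 - circleMap 0 s θ / Z = (Z - circleMap 0 s θ) / Z := by field_simp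
    show (Complex.log (1 - circleMap 0 s θ / Z)).re = _
    rw [he, Complex.log_re, norm_div,
      Real.log_div (norm_ne_zero_iff.mpr (hZsub θ)) (norm_ne_zero_iff.mpr hZ0)]
  have hgcont : Continuous fun θ : ℝ => Real.log (‖Z - circleMap 0 s θ‖) :=
    (continuous_norm.comp
      (continuous_const.sub (continuous_circleMap 0 s))).log
      fun θ => norm_ne_zero_iff.mpr (hZsub θ)
  have h5 : (∫ θ in (0:ℝ)..(2*Real.pi),
      (Real.log (‖Z - circleMap 0 s θ‖) - Real.log (‖Z‖))) = 0 := by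
    have := intervalIntegral.integral_congr (a := (0:ℝ)) (b := 2*Real.pi) (μ := volume)
      fun θ _ => (h4 θ).symm
    exact this.trans h3
  rw [intervalIntegral.integral_sub (hgcont.intervalIntegrable _ _)
    (intervalIntegrable_const), intervalIntegral.integral_const, smul_eq_mul] at h5
  linarith [h5]

theorem stmt_18 (Q : ℝ) (hQ : 0 < Q) (Z : ℂ) (hZ : 1 / Real.sqrt Q ≤ ‖Z‖) :
    ((1 + Q) / Real.pi) *
        ∫ z in {z : ℂ | ‖z‖ < 1 / Real.sqrt Q},
          Real.log (‖Z - z‖ ^ 2) / (1 + ‖z‖ ^ 2) ^ 2 =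
      Real.log (‖Z‖ ^ 2) := by
  have hsq : 0 < Real.sqrt Q := Real.sqrt_pos.mpr hQ
  set r : ℝ := 1 / Real.sqrt Q with hrdef
  have hr : 0 < r := by positivity
  have hrZ : r ≤ ‖Z‖ := hZ
  have hc0 : 0 < ‖Z‖ := lt_of_lt_of_le hr hrZ
  have hZne : Z ≠ 0 := norm_pos_iff.mp hc0
  have hr2 : r ^ 2 = 1 / Q := by rw [hrdef, div_pow, one_pow, Real.sq_sqrt hQ.le]
  set c := ‖Z‖ with hcdef
  set g : ℂ → ℝ := fun z => Real.log (‖Z - z‖ ^ 2) / (1 + ‖z‖ ^ 2) ^ 2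
    with hg
  set S : Set ℂ := {z | ‖z‖ < r} with hS
  have hSmeas : MeasurableSet S :=
    (isOpen_lt continuous_norm continuous_const).measurableSet
  set T : Set (ℝ × ℝ) := Set.Ioo 0 r ×ˢ Set.Ioo (-Real.pi) Real.pi with hT
  have hTmeas : MeasurableSet T := measurableSet_Ioo.prod measurableSet_Ioo
  set H : ℝ × ℝ → ℝ := fun p => p.1 • g (Complex.polarCoord.symm p) with hH
  have hsymm : ∀ p : ℝ × ℝ, Complex.polarCoord.symm p = circleMap 0 p.1 p.2 := by
    intro p
    simp [circleMap, Complex.exp_mul_I, Complex.ofReal_cos, Complex.ofReal_sin]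
  have htarget : polarCoord.target = Set.Ioi (0:ℝ) ×ˢ Set.Ioo (-Real.pi) Real.pi := rfl
  have step1 : (∫ z in S, g z) = ∫ p in polarCoord.target,
      p.1 • (S.indicator g) (Complex.polarCoord.symm p) := by
    rw [Complex.integral_comp_polarCoord_symm (S.indicator g), integral_indicator hSmeas]
  have step2 : (∫ p in polarCoord.target,
      p.1 • (S.indicator g) (Complex.polarCoord.symm p)) = ∫ p in T, H p := by
    rw [setIntegral_congr_fun (by
        rw [htarget]
        exact measurableSet_Ioi.prod measurableSet_Ioo)
      (g := fun p => T.indicator H p) ?_]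
    · rw [setIntegral_indicator hTmeas]
      congr 1
      rw [htarget]
      rw [Set.inter_eq_right.mpr]
      intro p hp
      exact ⟨Set.mem_Ioi.mpr hp.1.1, hp.2⟩
    · intro p hp
      rw [htarget] at hp
      have hp1 : 0 < p.1 := hp.1
      show p.1 • (S.indicator g) (Complex.polarCoord.symm p) = T.indicator H p
      by_cases hpr : p.1 < r
      · have hmem : Complex.polarCoord.symm p ∈ S := by
          simp only [hS, Set.mem_setOf_eq, Complex.norm_polarCoord_symm, abs_of_pos hp1]
          exact hpr
        rw [Set.indicator_of_mem hmem, Set.indicator_of_mem (show p ∈ T from ⟨⟨hp1, hpr⟩, hp.2⟩)]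
      · have hmem : Complex.polarCoord.symm p ∉ S := by
          simp only [hS, Set.mem_setOf_eq, Complex.norm_polarCoord_symm, abs_of_pos hp1]
          exact hpr
        rw [Set.indicator_of_notMem hmem, Set.indicator_of_notMem
          (show p ∉ T by rintro ⟨⟨_, h2⟩, _⟩; exact hpr h2), smul_zero]
  have hcm : Continuous fun p : ℝ × ℝ => circleMap 0 p.1 p.2 := by
    simp only [circleMap, zero_add]
    exact (Complex.continuous_ofReal.comp continuous_fst).mul
      (Complex.continuous_exp.comp
        ((Complex.continuous_ofReal.comp continuous_snd).mul continuous_const))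
  have hHfun : H = fun p : ℝ × ℝ =>
      p.1 * (Real.log (‖Z - circleMap 0 p.1 p.2‖ ^ 2) / (1 + p.1 ^ 2) ^ 2) := by
    funext p
    simp only [hH, hg, smul_eq_mul, hsymm p]
    rw [norm_circleMap_zero, sq_abs]
  -- the dominating function
  set φ : ℝ → ℝ := fun s => 2 * r * (|Real.log (c - s)| + |Real.log (c + s)|) with hφdef
  have hφint : IntegrableOn φ (Set.Ioo 0 r) := by
    have hlog : IntervalIntegrable Real.log volume (c - r) c := by
      rw [intervalIntegrable_iff_integrableOn_Ioc_of_le (by linarith)]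
      exact (integrableOnLogIoc c).mono_set (Set.Ioc_subset_Ioc_left (by linarith))
    have hA : IntervalIntegrable (fun s : ℝ => Real.log (c - s)) volume 0 r := by
      have := (hlog.symm.comp_sub_left c)
      simpa using this
    have hB : IntervalIntegrable (fun s : ℝ => Real.log (c + s)) volume 0 r := by
      apply ContinuousOn.intervalIntegrable
      apply ContinuousOn.log (continuousOn_const.add continuousOn_id)
      intro x hx
      rw [Set.uIcc_of_le hr.le] at hx
      simp only [Pi.add_apply, id_eq, ← hcdef]
      nlinarith [hx.1, hc0]
    have hAB : IntervalIntegrable φ volume 0 r := by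
      simpa [hφdef] using ((hA.abs.add hB.abs).const_mul (2 * r))
    rw [intervalIntegrable_iff_integrableOn_Ioo_of_le hr.le] at hAB
    exact hAB
  have hφprod : Integrable (fun p : ℝ × ℝ => φ p.1) (volume.restrict T) := by
    have h1 : Integrable (fun p : ℝ × ℝ => φ p.1 * (1 : ℝ))
        ((volume.restrict (Set.Ioo (0:ℝ) r)).prod
          (volume.restrict (Set.Ioo (-Real.pi) Real.pi))) :=
      Integrable.mul_prod hφint (integrable_const 1)
    rw [Measure.prod_restrict, ← Measure.volume_eq_prod] at h1
    simpa [hT] using h1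
  have hInt : IntegrableOn H T := by
    refine Integrable.mono' hφprod ?_ ?_
    · rw [hHfun]
      apply Measurable.aestronglyMeasurable
      apply Measurable.mul measurable_fst
      apply Measurable.div
      · exact Real.measurable_log.comp
          (((continuous_norm.comp (continuous_const.sub hcm)).pow 2).measurable)
      · fun_prop
    · filter_upwards [ae_restrict_mem hTmeas] with p hp
      obtain ⟨⟨hp0, hpr⟩, _⟩ := hp
      set w := Complex.polarCoord.symm p with hw
      have habsw : ‖w‖ = p.1 := by
        rw [hw, Complex.norm_polarCoord_symm, abs_of_pos hp0]
      set x := ‖Z - w‖ with hx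
      have hxlb : c - p.1 ≤ x := by
        have h := norm_sub_norm_le Z w
        rw [habsw] at h
        linarith [h]
      have hxub : x ≤ c + p.1 := by
        have h := norm_sub_le Z w
        rw [habsw] at h
        exact h
      have hcp : 0 < c - p.1 := by linarith
      have hxpos : 0 < x := by linarith
      have hlogx : |Real.log x| ≤ |Real.log (c - p.1)| + |Real.log (c + p.1)| := by
        have hl1 : Real.log (c - p.1) ≤ Real.log x := Real.log_le_log hcp hxlb
        have hl2 : Real.log x ≤ Real.log (c + p.1) := Real.log_le_log hxpos hxub
        rcases le_total (Real.log x) 0 with h | h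
        · rw [abs_of_nonpos h]
          have : -Real.log x ≤ -Real.log (c - p.1) := by linarith
          calc -Real.log x ≤ |Real.log (c - p.1)| := le_trans this (neg_le_abs _)
            _ ≤ _ := le_add_of_nonneg_right (abs_nonneg _)
        · rw [abs_of_nonneg h]
          calc Real.log x ≤ |Real.log (c + p.1)| := le_trans hl2 (le_abs_self _)
            _ ≤ _ := le_add_of_nonneg_left (abs_nonneg _)
      have hden : (1:ℝ) ≤ (1 + p.1 ^ 2) ^ 2 := by nlinarith
      have hdenpos : (0:ℝ) < (1 + p.1 ^ 2) ^ 2 := by positivity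
      have hlogsq : |Real.log (x ^ 2)| = 2 * |Real.log x| := by
        rw [Real.log_pow]
        rw [abs_mul]
        norm_num
      have hgw : g w = Real.log (x ^ 2) / (1 + p.1 ^ 2) ^ 2 := by
        simp only [hg, ← hx, habsw]
      calc ‖H p‖ = p.1 * (|Real.log (x ^ 2)| / (1 + p.1 ^ 2) ^ 2) := by
            rw [hH]
            show ‖p.1 • g (Complex.polarCoord.symm p)‖ = _
            rw [← hw, hgw, smul_eq_mul, Real.norm_eq_abs, abs_mul, abs_of_pos hp0,
              abs_div, abs_of_pos hdenpos]
        _ ≤ p.1 * |Real.log (x ^ 2)| :=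
            mul_le_mul_of_nonneg_left (div_le_self (abs_nonneg _) hden) hp0.le
        _ = p.1 * (2 * |Real.log x|) := by rw [hlogsq]
        _ ≤ r * (2 * (|Real.log (c - p.1)| + |Real.log (c + p.1)|)) := by
            apply mul_le_mul hpr.le _ (by positivity) hr.le
            exact mul_le_mul_of_nonneg_left hlogx (by norm_num)
        _ = φ p.1 := by rw [hφdef]; ring
  -- Fubini
  have step3 : (∫ p in T, H p)
      = ∫ s in Set.Ioo (0:ℝ) r, ∫ θ in Set.Ioo (-Real.pi) Real.pi, H (s, θ) := by
    rw [hT] at hInt ⊢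
    exact setIntegral_prod H hInt
  have hinner : ∀ s ∈ Set.Ioo (0:ℝ) r,
      (∫ θ in Set.Ioo (-Real.pi) Real.pi, H (s, θ))
        = (s / (1 + s ^ 2) ^ 2) * (4 * Real.pi * Real.log c) := by
    intro s hsmem
    obtain ⟨hs0, hsr⟩ := hsmem
    have hsZ : s < c := lt_of_lt_of_le hsr hrZ
    have h1 : ∀ θ : ℝ, H (s, θ)
        = (s / (1 + s ^ 2) ^ 2) * Real.log (‖Z - circleMap 0 s θ‖ ^ 2) := by
      intro θ
      rw [hHfun]
      show s * (Real.log (‖Z - circleMap 0 s θ‖ ^ 2) / (1 + s ^ 2) ^ 2) = _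
      ring
    simp only [h1]
    rw [MeasureTheory.integral_const_mul]
    have hK : (∫ θ in Set.Ioo (-Real.pi) Real.pi,
        Real.log (‖Z - circleMap 0 s θ‖ ^ 2)) = 4 * Real.pi * Real.log c := by
      rw [← integral_Ioc_eq_integral_Ioo,
        ← intervalIntegral.integral_of_le (by linarith [Real.pi_pos] : -Real.pi ≤ Real.pi)]
      have hper : Function.Periodic
          (fun θ => Real.log (‖Z - circleMap 0 s θ‖ ^ 2)) (2 * Real.pi) :=
        (periodic_circleMap 0 s).comp fun w => Real.log (‖Z - w‖ ^ 2)
      have heq := hper.intervalIntegral_add_eq (-Real.pi) 0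
      rw [show -Real.pi + 2 * Real.pi = Real.pi by ring, zero_add] at heq
      rw [heq]
      have h2 : ∀ θ : ℝ, Real.log (‖Z - circleMap 0 s θ‖ ^ 2)
          = 2 * Real.log (‖Z - circleMap 0 s θ‖) := by
        intro θ
        rw [Real.log_pow]
        norm_num
      rw [intervalIntegral.integral_congr (fun θ _ => h2 θ),
        intervalIntegral.integral_const_mul, meanValueLog Z s hs0 hsZ]
      ring
    rw [hK]
  have step4 : (∫ s in Set.Ioo (0:ℝ) r, ∫ θ in Set.Ioo (-Real.pi) Real.pi, H (s, θ))
      = ∫ s in Set.Ioo (0:ℝ) r, (s / (1 + s ^ 2) ^ 2) * (4 * Real.pi * Real.log c) :=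
    setIntegral_congr_fun measurableSet_Ioo hinner
  have step5 : (∫ s in Set.Ioo (0:ℝ) r, (s / (1 + s ^ 2) ^ 2) * (4 * Real.pi * Real.log c))
      = (r ^ 2 / (2 * (1 + r ^ 2))) * (4 * Real.pi * Real.log c) := by
    rw [integral_mul_const]
    congr 1
    rw [← integral_Ioc_eq_integral_Ioo, ← intervalIntegral.integral_of_le hr.le]
    have hderiv : ∀ x ∈ Set.uIcc (0:ℝ) r,
        HasDerivAt (fun y : ℝ => -(1/2) * (1 + y ^ 2)⁻¹) (x / (1 + x ^ 2) ^ 2) x := by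
      intro x _
      have h1 : HasDerivAt (fun y : ℝ => 1 + y ^ 2) (2 * x) x := by
        simpa using ((hasDerivAt_pow 2 x).const_add (1:ℝ))
      have h2 := (h1.inv (by positivity)).const_mul (-(1/2) : ℝ)
      exact h2.congr_deriv (by ring)
    rw [intervalIntegral.integral_eq_sub_of_hasDerivAt hderiv ?_]
    · field_simp
      ring
    · apply Continuous.intervalIntegrable
      apply Continuous.div continuous_id (by fun_prop)
      intro x
      positivity
  rw [step1, step2, step3, step4, step5, Real.log_pow]
  push_cast
  rw [hr2]
  have hQ1 : Q + 1 ≠ 0 := by positivity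
  field_simp
  ring
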